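/- Let A be a normalized deterministic parity tree automaton over a finite nonempty alphabet Σ and let q be a state of A. Then there exist a tree t ∈ T_Σ and an accepting run of A on t in which q occurs at infinitely many pairwise incomparable nodes (nodes v, w ∈ {0,1}* such that neither is a prefix of the other) if and only if q is productive and there is an accepting loop in A that replicates q. -/

import Mathlib

open Filter

/-- A deterministic parity tree automaton over alphabet `Alpha` with state set `Q`. -/
structure DPTA (Alpha : Type) (Q : Type) where
  init : Q
  delta : Q → Alpha → Q × Q
  rank : Q → ℕ

namespace DPTA

variable {Alpha Q : Type}

/-- The state reached in one step from `q` reading letter `s` in direction `d`. -/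
def next (M : DPTA Alpha Q) (q : Q) (s : Alpha) (d : Bool) : Q :=
  if d then (M.delta q s).2 else (M.delta q s).1

/-- The state of the run started in `q` on the tree `t` at the node `v`
(nodes are words over `{0,1}`, head = first direction from the root). -/
def runFrom (M : DPTA Alpha Q) : Q → (List Bool → Alpha) → List Bool → Q
  | q, _, [] => q
  | q, t, d :: v => runFrom M (M.next q (t []) d) (fun u => t (d :: u)) v

/-- The state of the (unique) run of `M` on `t` at node `v`. -/
def run (M : DPTA Alpha Q) (t : List Bool → Alpha) (v : List Bool) : Q :=
  runFrom M M.init t v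

/-- Parity acceptance: the largest value occurring infinitely often is even. -/
def ParityAccept (f : ℕ → ℕ) : Prop :=
  Even (sSup {r : ℕ | ∃ᶠ n in atTop, f n = r})

/-- The prefix of length `n` of an infinite path. -/
def pref (π : ℕ → Bool) (n : ℕ) : List Bool :=
  List.ofFn fun i : Fin n => π i

/-- The run of `M` on `t` started at state `q` is accepting. -/
def AcceptsFrom (M : DPTA Alpha Q) (q : Q) (t : List Bool → Alpha) : Prop :=
  ∀ π : ℕ → Bool, ParityAccept fun n => M.rank (runFrom M q t (pref π n))

/-- The language recognised by `M`: trees with accepting run. -/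
def Lang (M : DPTA Alpha Q) : Set (List Bool → Alpha) :=
  {t | M.AcceptsFrom M.init t}

/-- The state reached from `q` following a finite sequence of steps
(steps = letter together with direction). -/
def follow (M : DPTA Alpha Q) (q : Q) (steps : List (Alpha × Bool)) : Q :=
  steps.foldl (fun p s => M.next p s.1 s.2) q

/-- All states visited along a path (the starting state included). -/
def statesOn (M : DPTA Alpha Q) (q : Q) (steps : List (Alpha × Bool)) : List Q :=
  List.scanl (fun p s => M.next p s.1 s.2) q steps

/-- The largest rank of a state visited along a path. -/
def maxRankOn (M : DPTA Alpha Q) (q : Q) (steps : List (Alpha × Bool)) : ℕ :=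
  ((M.statesOn q steps).map M.rank).foldr max 0

/-- `steps` forms a loop at `q` (a path of positive length from `q` to `q`). -/
def IsLoop (M : DPTA Alpha Q) (q : Q) (steps : List (Alpha × Bool)) : Prop :=
  steps ≠ [] ∧ M.follow q steps = q

/-- `M` contains an `(i,k)`-flower: loops `lam i, …, lam k` at a common state `q`,
the largest rank on `lam j` has the parity of `j` and increases strictly with `j`. -/
def HasFlower (M : DPTA Alpha Q) (i k : ℕ) : Prop :=
  ∃ (q : Q) (lam : ℕ → List (Alpha × Bool)),
    (∀ j, i ≤ j → j ≤ k → M.IsLoop q (lam j) ∧ M.maxRankOn q (lam j) % 2 = j % 2) ∧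
    (∀ j, i ≤ j → j < k → M.maxRankOn q (lam j) < M.maxRankOn q (lam (j + 1)))

/-- `q` is reachable from the initial state. -/
def Reachable (M : DPTA Alpha Q) (q : Q) : Prop :=
  ∃ steps, M.follow M.init steps = q

/-- `q` is productive: it occurs in some accepting run of `M`. -/
def Productive (M : DPTA Alpha Q) (q : Q) : Prop :=
  ∃ t ∈ M.Lang, ∃ v, M.run t v = q

/-- The transition from `q` reading `s` is used in some accepting run of `M`. -/
def ProductiveTrans (M : DPTA Alpha Q) (q : Q) (s : Alpha) : Prop :=
  ∃ t ∈ M.Lang, ∃ v, M.run t v = q ∧ t v = s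

/-- `q` is all-rejecting: started from `q`, the automaton accepts no tree. -/
def AllRejecting (M : DPTA Alpha Q) (q : Q) : Prop :=
  ∀ t, ¬ M.AcceptsFrom q t

/-- `M` is normalized: every state is reachable, every state is productive except
possibly one all-rejecting state `⊥` with `δ(⊥,σ) = (⊥,⊥)`, and every transition is
productive or of the form `δ(q,σ) = (⊥,⊥)`. -/
def Normalized (M : DPTA Alpha Q) : Prop :=
  (∀ q, M.Reachable q) ∧
  ∃ bot : Option Q,
    (∀ q, some q ≠ bot → M.Productive q) ∧
    (∀ q, some q = bot → M.AllRejecting q ∧ ∀ s, M.delta q s = (q, q)) ∧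
    (∀ q s, M.ProductiveTrans q s ∨
      (some (M.delta q s).1 = bot ∧ some (M.delta q s).2 = bot))

end DPTA


/-- The state `p` is replicated by an accepting loop: there is an accepting loop whose
first step reads a letter `s` in direction `d`, and a path to `p` starting with the
same letter `s` read in the opposite direction `!d`. -/
def ReplicatedByAccLoop {Alpha Q : Type} (M : DPTA Alpha Q) (p : Q) : Prop :=
  ∃ (q1 : Q) (s : Alpha) (d : Bool) (l : List (Alpha × Bool)),
    M.IsLoop q1 ((s, d) :: l) ∧ Even (M.maxRankOn q1 ((s, d) :: l)) ∧
    ∃ rest : List (Alpha × Bool), M.follow q1 ((s, !d) :: rest) = p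

namespace RepAux

open Filter DPTA

variable {Alpha Q : Type}

def subt (t : List Bool → Alpha) (v : List Bool) : List Bool → Alpha := fun w => t (v ++ w)

lemma runFrom_nil (M : DPTA Alpha Q) (q : Q) (t : List Bool → Alpha) : M.runFrom q t [] = q := rfl

lemma runFrom_cons (M : DPTA Alpha Q) (q : Q) (t : List Bool → Alpha) (d : Bool) (v : List Bool) :
    M.runFrom q t (d :: v) = M.runFrom (M.next q (t []) d) (fun u => t (d :: u)) v := rfl

lemma subt_nil (t : List Bool → Alpha) : subt t [] = t := by funext w; simp [subt]

lemma subt_cons (t : List Bool → Alpha) (d : Bool) (v : List Bool) :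
    subt t (d :: v) = subt (fun u => t (d :: u)) v := by funext w; simp [subt]

lemma runFrom_append (M : DPTA Alpha Q) (q : Q) (t : List Bool → Alpha) (u v : List Bool) :
    M.runFrom q t (u ++ v) = M.runFrom (M.runFrom q t u) (subt t u) v := by
  induction u generalizing q t with
  | nil => simp [subt_nil, runFrom_nil]
  | cons d u ih => simp only [List.cons_append, runFrom_cons, ih, subt_cons]

/-- The sequence of steps (letter, direction) along node `v` in tree `t`. -/
def stepsOf (t : List Bool → Alpha) : List Bool → List (Alpha × Bool)
  | [] => []
  | d :: v => (t [], d) :: stepsOf (fun u => t (d :: u)) v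

lemma follow_nil (M : DPTA Alpha Q) (q : Q) : M.follow q [] = q := rfl

lemma follow_cons (M : DPTA Alpha Q) (q : Q) (a : Alpha) (d : Bool) (st : List (Alpha × Bool)) :
    M.follow q ((a, d) :: st) = M.follow (M.next q a d) st := rfl

lemma follow_append (M : DPTA Alpha Q) (q : Q) (st₁ st₂ : List (Alpha × Bool)) :
    M.follow q (st₁ ++ st₂) = M.follow (M.follow q st₁) st₂ := List.foldl_append

lemma runFrom_eq_follow (M : DPTA Alpha Q) (q : Q) (t : List Bool → Alpha) (v : List Bool) :
    M.runFrom q t v = M.follow q (stepsOf t v) := by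
  induction v generalizing q t with
  | nil => rfl
  | cons d v ih => simp only [runFrom_cons, stepsOf, follow_cons, ih]

lemma stepsOf_length (t : List Bool → Alpha) (v : List Bool) :
    (stepsOf t v).length = v.length := by
  induction v generalizing t with
  | nil => rfl
  | cons d v ih => simp [stepsOf, ih]

lemma stepsOf_take (t : List Bool → Alpha) (v : List Bool) (k : ℕ) :
    (stepsOf t v).take k = stepsOf t (v.take k) := by
  induction v generalizing t k with
  | nil => simp [stepsOf]
  | cons d v ih =>
    cases k with
    | zero => simp [stepsOf]
    | succ k => simp [stepsOf, ih]

lemma mem_statesOn {M : DPTA Alpha Q} {p q : Q} {st : List (Alpha × Bool)} :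
    p ∈ M.statesOn q st ↔ ∃ k ≤ st.length, M.follow q (st.take k) = p := by
  induction st generalizing q with
  | nil =>
    constructor
    · rintro h
      simp only [DPTA.statesOn, List.scanl] at h
      rcases List.mem_singleton.mp h with rfl
      exact ⟨0, le_refl _, rfl⟩
    · rintro ⟨k, hk, rfl⟩
      obtain rfl : k = 0 := Nat.le_zero.mp (by simpa using hk)
      simp [DPTA.statesOn, List.scanl, DPTA.follow]
  | cons a st ih =>
    unfold DPTA.statesOn at ih ⊢
    rw [List.scanl_cons, List.mem_cons]
    rw [ih]
    constructor
    · rintro (rfl | ⟨k, hk, rfl⟩)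
      · exact ⟨0, by simp, rfl⟩
      · exact ⟨k + 1, by simpa using hk, by obtain ⟨a1, a2⟩ := a; simp [List.take_cons]; rfl⟩
    · rintro ⟨k, hk, rfl⟩
      cases k with
      | zero => left; rfl
      | succ k =>
        right
        refine ⟨k, by simpa using hk, ?_⟩
        obtain ⟨a1, a2⟩ := a
        simp [List.take_cons]; rfl

lemma le_foldr_max {l : List ℕ} {x : ℕ} (h : x ∈ l) : x ≤ l.foldr max 0 := by
  induction l with
  | nil => simp at h
  | cons a l ih =>
    rcases List.mem_cons.mp h with rfl | h
    · exact le_max_left _ _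
    · exact le_trans (ih h) (le_max_right _ _)

lemma foldr_max_le {l : List ℕ} {m : ℕ} (h : ∀ x ∈ l, x ≤ m) : l.foldr max 0 ≤ m := by
  induction l with
  | nil => simp
  | cons a l ih =>
    simp only [List.foldr_cons]
    exact max_le (h a (by simp)) (ih fun x hx => h x (List.mem_cons_of_mem _ hx))

lemma foldr_max_mem (l : List ℕ) : l.foldr max 0 = 0 ∨ l.foldr max 0 ∈ l := by
  induction l with
  | nil => simp
  | cons a l ih =>
    simp only [List.foldr_cons]
    rcases max_cases a (l.foldr max 0) with ⟨h1, _⟩ | ⟨h1, _⟩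
    · right; rw [h1]; exact List.mem_cons_self
    · rw [h1]
      rcases ih with h | h
      · left; exact h
      · right; exact List.mem_cons_of_mem _ h

lemma pref_succ (π : ℕ → Bool) (n : ℕ) :
    pref π (n + 1) = π 0 :: pref (fun k => π (k + 1)) n := by
  simp only [pref, List.ofFn_succ]
  rfl

lemma pref_add (π : ℕ → Bool) (a b : ℕ) :
    pref π (a + b) = pref π a ++ List.ofFn (fun j : Fin b => π (a + j)) := by
  simp only [pref]
  rw [List.ofFn_add]
  congr 1

lemma pref_snoc (π : ℕ → Bool) (n : ℕ) :
    pref π (n + 1) = pref π n ++ [π n] := by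
  rw [pref_add π n 1]
  simp

end RepAux
namespace RepAux

open Filter DPTA

variable {Alpha Q : Type}

lemma frequently_shift {f : ℕ → ℕ} {k r : ℕ} :
    (∃ᶠ n in atTop, f (n + k) = r) ↔ (∃ᶠ n in atTop, f n = r) := by
  rw [frequently_atTop, frequently_atTop]
  constructor
  · intro h N
    obtain ⟨b, hb, hfb⟩ := h N
    exact ⟨b + k, le_trans hb (Nat.le_add_right _ _), hfb⟩
  · intro h N
    obtain ⟨b, hb, hfb⟩ := h (N + k)
    refine ⟨b - k, by omega, ?_⟩
    rwa [Nat.sub_add_cancel (by omega)]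

lemma parityAccept_shift (f : ℕ → ℕ) (k : ℕ) :
    DPTA.ParityAccept (fun n => f (n + k)) ↔ DPTA.ParityAccept f := by
  unfold DPTA.ParityAccept
  have : {r : ℕ | ∃ᶠ n in atTop, f (n + k) = r} = {r : ℕ | ∃ᶠ n in atTop, f n = r} := by
    ext r; exact frequently_shift
  rw [this]

lemma exists_frequent {β : Type*} [Fintype β] (f : ℕ → β) (s : Set ℕ) (hs : s.Infinite) :
    ∃ b, {n ∈ s | f n = b}.Infinite := by
  by_contra h
  push_neg at h
  try simp only [Set.not_infinite] at h
  have : s ⊆ ⋃ b ∈ (Finset.univ : Finset β), {n ∈ s | f n = b} := by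
    intro n hn
    simp only [Set.mem_iUnion]
    exact ⟨f n, Finset.mem_univ _, hn, rfl⟩
  exact hs (Set.Finite.subset (Set.Finite.biUnion (Finset.univ : Finset β).finite_toSet
    (fun b _ => h b)) this)

lemma top_rank (f : ℕ → ℕ) (B : ℕ) (hB : ∀ n, f n ≤ B) :
    ∃ r, r = sSup {r : ℕ | ∃ᶠ n in atTop, f n = r} ∧ (∃ᶠ n in atTop, f n = r) ∧
      (∀ᶠ n in atTop, f n ≤ r) := by
  set A := {r : ℕ | ∃ᶠ n in atTop, f n = r} with hA
  have hbdd : BddAbove A := by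
    refine ⟨B, fun r hr => ?_⟩
    obtain ⟨n, hn⟩ := hr.exists
    exact hn ▸ hB n
  have hfin : ∀ (s : Set ℕ), s.Infinite → ∃ r, r ∈ A ∧ {n ∈ s | f n = r}.Infinite := by
    intro s hs
    set f' : ℕ → Fin (B + 1) := fun n => ⟨f n, Nat.lt_succ_of_le (hB n)⟩ with hf'
    obtain ⟨b, hb⟩ := exists_frequent f' s hs
    refine ⟨b.val, ?_, ?_⟩
    · rw [hA, Set.mem_setOf_eq, Nat.frequently_atTop_iff_infinite]
      refine hb.mono ?_
      rintro n ⟨-, hn⟩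
      show f n = b.val
      rw [← hn]
    · refine hb.mono ?_
      rintro n ⟨hn1, hn2⟩
      exact ⟨hn1, show f n = b.val by rw [← hn2]⟩
  obtain ⟨r0, hr0A, -⟩ := hfin Set.univ (Set.infinite_univ)
  have hne : A.Nonempty := ⟨r0, hr0A⟩
  have hmem : sSup A ∈ A := Nat.sSup_mem hne hbdd
  refine ⟨sSup A, rfl, hmem, ?_⟩
  by_contra hev
  have hfreq : {n | sSup A < f n}.Infinite := by
    rw [← Nat.frequently_atTop_iff_infinite]
    rw [frequently_atTop]
    intro a
    rw [eventually_atTop] at hev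
    push_neg at hev
    obtain ⟨b, hb1, hb2⟩ := hev a
    exact ⟨b, hb1, by omega⟩
  obtain ⟨r1, hr1A, hr1inf⟩ := hfin _ hfreq
  obtain ⟨n, hn1, hn2⟩ := hr1inf.nonempty
  have : r1 ≤ sSup A := le_csSup hbdd hr1A
  simp only [Set.mem_setOf_eq] at hn1
  omega

lemma acceptsFrom_subtree {M : DPTA Alpha Q} {p : Q} {t : List Bool → Alpha}
    (h : M.AcceptsFrom p t) (v : List Bool) :
    M.AcceptsFrom (M.runFrom p t v) (subt t v) := by
  intro π
  classical
  set π' : ℕ → Bool := fun n => if h : n < v.length then v[n] else π (n - v.length) with hπ'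
  have hpref : ∀ n, pref π' (v.length + n) = v ++ pref π n := by
    intro n
    rw [pref_add]
    congr 1
    · apply List.ext_getElem
      · simp [pref]
      · intro i h1 h2
        simp only [pref, List.getElem_ofFn, hπ']
        rw [dif_pos h2]
    · apply List.ext_getElem
      · simp [pref]
      · intro i h1 h2
        simp only [pref, List.getElem_ofFn, hπ']
        rw [dif_neg (by omega)]
        congr 1
        omega
  have h1 := h π'
  rw [← parityAccept_shift _ v.length] at h1
  have heq : (fun n => M.rank (M.runFrom p t (pref π' (n + v.length)))) =
      fun n => M.rank (M.runFrom (M.runFrom p t v) (subt t v) (pref π n)) := by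
    funext n
    rw [Nat.add_comm, hpref, runFrom_append]
  rwa [heq] at h1

lemma acceptsFrom_step {M : DPTA Alpha Q} {p : Q} {t : List Bool → Alpha}
    (h : ∀ e : Bool, M.AcceptsFrom (M.next p (t []) e) (fun v => t (e :: v))) :
    M.AcceptsFrom p t := by
  intro π
  have h1 := h (π 0) (fun k => π (k + 1))
  rw [← parityAccept_shift _ 1]
  have heq : (fun n => M.rank (M.runFrom p t (pref π (n + 1)))) =
      fun n => M.rank (M.runFrom (M.next p (t []) (π 0)) (fun v => t (π 0 :: v))
        (pref (fun k => π (k + 1)) n)) := by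
    funext n
    rw [pref_succ, runFrom_cons]
  rwa [heq]

end RepAux
namespace RepAux

open Filter DPTA

variable {Alpha Q : Type}

/-- A tree following `steps`, attaching `sib i` at the sibling of step `i`,
and continuing as `tk` at the end. -/
def graft : List (Alpha × Bool) → (ℕ → List Bool → Alpha) → (List Bool → Alpha) →
    List Bool → Alpha
  | [], _, tk, v => tk v
  | (a, _) :: _, _, _, [] => a
  | (_, dd) :: st, sib, tk, e :: v =>
    if e = dd then graft st (fun n => sib (n + 1)) tk v else sib 0 v

lemma graft_nil (sib : ℕ → List Bool → Alpha) (tk : List Bool → Alpha) :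
    graft [] sib tk = tk := rfl

lemma graft_root (a : Alpha) (dd : Bool) (st : List (Alpha × Bool)) (sib tk) :
    graft ((a, dd) :: st) sib tk [] = a := rfl

lemma graft_child_on (a : Alpha) (dd : Bool) (st : List (Alpha × Bool)) (sib tk) :
    (fun v => graft ((a, dd) :: st) sib tk (dd :: v)) = graft st (fun n => sib (n + 1)) tk := by
  funext v; simp [graft]

lemma graft_child_off (a : Alpha) (dd e : Bool) (st : List (Alpha × Bool)) (sib tk)
    (h : e ≠ dd) :
    (fun v => graft ((a, dd) :: st) sib tk (e :: v)) = sib 0 := by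
  funext v; simp [graft, h]

lemma graft_run (M : DPTA Alpha Q) (steps : List (Alpha × Bool))
    (sib : ℕ → List Bool → Alpha) (tk : List Bool → Alpha) (p : Q) (w : List Bool) :
    M.runFrom p (graft steps sib tk) (steps.map Prod.snd ++ w) =
      M.runFrom (M.follow p steps) tk w := by
  induction steps generalizing p sib with
  | nil => simp [graft_nil, follow_nil]
  | cons a st ih =>
    obtain ⟨a1, a2⟩ := a
    simp only [List.map_cons, List.cons_append, runFrom_cons, graft_root, graft_child_on,
      follow_cons]
    exact ih _ _

lemma graft_accept (M : DPTA Alpha Q) (steps : List (Alpha × Bool))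
    (sib : ℕ → List Bool → Alpha) (tk : List Bool → Alpha) (p : Q)
    (hsib : ∀ i (h : i < steps.length),
      M.AcceptsFrom (M.next (M.follow p (steps.take i)) (steps[i]'h).1 (!(steps[i]'h).2)) (sib i))
    (htk : M.AcceptsFrom (M.follow p steps) tk) :
    M.AcceptsFrom p (graft steps sib tk) := by
  induction steps generalizing p sib with
  | nil => rw [graft_nil]; exact htk
  | cons a st ih =>
    obtain ⟨a1, a2⟩ := a
    apply acceptsFrom_step
    intro e
    rw [graft_root]
    by_cases he : e = a2
    · subst he
      rw [graft_child_on]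
      apply ih
      · intro i hi
        have := hsib (i + 1) (by simpa using hi)
        simpa [List.take_cons, follow_cons] using this
      · simpa [follow_cons] using htk
    · rw [graft_child_off _ _ _ _ _ _ he]
      have h0 := hsib 0 (by simp)
      have he' : e = !a2 := by cases e <;> cases a2 <;> simp_all
      simp only [List.take_zero, follow_nil, List.getElem_cons_zero] at h0
      rw [he']
      exact h0

/-- The infinite spine tree: follows `step` forever, hanging `sib i` off the
sibling of the `i`-th spine step. -/
def og (step : ℕ → Alpha × Bool) (sib : ℕ → List Bool → Alpha) (i : ℕ) :
    List Bool → Alpha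
  | [] => (step i).1
  | e :: v => if e = (step i).2 then og step sib (i + 1) v else sib i v

lemma og_root (step : ℕ → Alpha × Bool) (sib i) : og step sib i [] = (step i).1 := rfl

lemma og_child_on (step : ℕ → Alpha × Bool) (sib i) :
    (fun v => og step sib i ((step i).2 :: v)) = og step sib (i + 1) := by
  funext v; simp [og]

lemma og_child_off (step : ℕ → Alpha × Bool) (sib i e) (h : e ≠ (step i).2) :
    (fun v => og step sib i (e :: v)) = sib i := by
  funext v; simp [og, h]

variable {M : DPTA Alpha Q} {step : ℕ → Alpha × Bool} {sib : ℕ → List Bool → Alpha} {gs : ℕ → Q}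

lemma og_run_spine (hgs : ∀ k, gs (k + 1) = M.next (gs k) (step k).1 (step k).2)
    (i m : ℕ) :
    M.runFrom (gs i) (og step sib i) (List.ofFn fun j : Fin m => (step (i + j)).2) =
      gs (i + m) := by
  induction m generalizing i with
  | zero => simp [runFrom_nil]
  | succ m ih =>
    rw [List.ofFn_succ]
    simp only [Fin.val_zero, Nat.add_zero, Fin.val_succ]
    rw [runFrom_cons, og_root, og_child_on, ← hgs i]
    have he : (List.ofFn fun j : Fin m => (step (i + (j + 1))).2) =
        (List.ofFn fun j : Fin m => (step (i + 1 + j)).2) := by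
      congr 1; funext j
      have h2 : i + ((j : ℕ) + 1) = i + 1 + (j : ℕ) := by omega
      rw [h2]
    rw [he, ih (i + 1), show i + (m + 1) = i + 1 + m by omega]

lemma og_run_dev (hgs : ∀ k, gs (k + 1) = M.next (gs k) (step k).1 (step k).2)
    (i m : ℕ) (w : List Bool) :
    M.runFrom (gs i) (og step sib i)
      ((List.ofFn fun j : Fin m => (step (i + j)).2) ++ (!(step (i + m)).2) :: w) =
      M.runFrom (M.next (gs (i + m)) (step (i + m)).1 (!(step (i + m)).2)) (sib (i + m)) w := by
  induction m generalizing i with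
  | zero =>
    simp only [List.ofFn_zero, List.nil_append, Nat.add_zero]
    rw [runFrom_cons, og_root, og_child_off _ _ _ _ (by simp)]
  | succ m ih =>
    rw [List.ofFn_succ]
    simp only [Fin.val_zero, Nat.add_zero, Fin.val_succ, List.cons_append]
    rw [runFrom_cons, og_root, og_child_on, ← hgs i]
    have he : (List.ofFn fun j : Fin m => (step (i + (j + 1))).2) =
        (List.ofFn fun j : Fin m => (step (i + 1 + j)).2) := by
      congr 1; funext j
      have h2 : i + ((j : ℕ) + 1) = i + 1 + (j : ℕ) := by omega
      rw [h2]
    rw [he, show i + (m + 1) = i + 1 + m by omega]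
    exact ih (i + 1)

lemma og_accept (hgs : ∀ k, gs (k + 1) = M.next (gs k) (step k).1 (step k).2)
    (hsib : ∀ i, M.AcceptsFrom (M.next (gs i) (step i).1 (!(step i).2)) (sib i))
    (hpar : DPTA.ParityAccept fun n => M.rank (gs n)) :
    M.AcceptsFrom (gs 0) (og step sib 0) := by
  intro π
  classical
  by_cases hall : ∀ m, π m = (step m).2
  · have heq : (fun n => M.rank (M.runFrom (gs 0) (og step sib 0) (pref π n))) =
        fun n => M.rank (gs n) := by
      funext n
      congr 1
      have hthis : pref π n = List.ofFn fun j : Fin n => (step j).2 := by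
        simp only [pref]
        congr 1; funext j; rw [hall]
      have hs := og_run_spine (sib := sib) hgs 0 n
      simp only [Nat.zero_add] at hs
      rw [hthis, hs]
    rw [heq]
    exact hpar
  · push_neg at hall
    have hex : ∃ m, π m ≠ (step m).2 := hall
    set m := Nat.find hex with hm
    have hmne : π m ≠ (step m).2 := Nat.find_spec hex
    have hmin : ∀ j < m, π j = (step j).2 := fun j hj => by
      by_contra hc
      exact Nat.find_min hex hj hc
    have hπm : π m = !(step m).2 := by
      cases h1 : π m <;> cases h2 : (step m).2 <;> simp_all
    have hrun : ∀ k, M.runFrom (gs 0) (og step sib 0) (pref π (m + 1 + k)) =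
        M.runFrom (M.next (gs m) (step m).1 (!(step m).2)) (sib m)
          (pref (fun j => π (m + 1 + j)) k) := by
      intro k
      have hsplit : pref π (m + 1 + k) =
          (List.ofFn fun j : Fin m => (step j).2) ++ (!(step m).2) ::
            (List.ofFn fun j : Fin k => π (m + 1 + j)) := by
        have h1 : pref π (m + 1 + k) = pref π (m + 1) ++
            (List.ofFn fun j : Fin k => π (m + 1 + j)) := pref_add π (m + 1) k
        have h2 : pref π (m + 1) = pref π m ++ [π m] := pref_snoc π m
        have h3 : pref π m = List.ofFn fun j : Fin m => (step j).2 := by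
          simp only [pref]
          congr 1; funext j
          rw [hmin j j.isLt]
        rw [h1, h2, h3, hπm]
        simp
      rw [hsplit]
      have := og_run_dev (sib := sib) hgs 0 m (List.ofFn fun j : Fin k => π (m + 1 + j))
      simp only [Nat.zero_add] at this
      rw [this]
      rfl
    rw [← parityAccept_shift _ (m + 1)]
    have heq : (fun n => M.rank (M.runFrom (gs 0) (og step sib 0) (pref π (n + (m + 1))))) =
        fun n => M.rank (M.runFrom (M.next (gs m) (step m).1 (!(step m).2)) (sib m)
          (pref (fun j => π (m + 1 + j)) n)) := by
      funext n
      rw [show n + (m + 1) = m + 1 + n by omega, hrun n]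
    rw [heq]
    exact hsib m _

lemma follow_cons' (M : DPTA Alpha Q) (q : Q) (x : Alpha × Bool) (st : List (Alpha × Bool)) :
    M.follow q (x :: st) = M.follow (M.next q x.1 x.2) st := rfl

lemma follow_ofFn (M : DPTA Alpha Q) (gs : ℕ → Q) (f : ℕ → Alpha × Bool)
    (hg : ∀ k, gs (k + 1) = M.next (gs k) (f k).1 (f k).2) (a m : ℕ) :
    M.follow (gs a) (List.ofFn fun j : Fin m => f (a + j)) = gs (a + m) := by
  induction m generalizing a with
  | zero => simp [follow_nil]
  | succ m ih =>
    rw [List.ofFn_succ]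
    simp only [Fin.val_zero, Nat.add_zero, Fin.val_succ]
    rw [follow_cons', ← hg a]
    have he : (List.ofFn fun j : Fin m => f (a + (j + 1))) =
        (List.ofFn fun j : Fin m => f (a + 1 + j)) := by
      congr 1; funext j
      have h2 : a + ((j : ℕ) + 1) = a + 1 + (j : ℕ) := by omega
      rw [h2]
    rw [he, ih (a + 1), show a + (m + 1) = a + 1 + m by omega]

lemma follow_take_succ (M : DPTA Alpha Q) (st : List (Alpha × Bool)) (j : ℕ)
    (h : j < st.length) (q : Q) :
    M.follow q (st.take (j + 1)) = M.next (M.follow q (st.take j)) (st[j]'h).1 (st[j]'h).2 := by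
  rw [List.take_succ, List.getElem?_eq_getElem h]
  simp only [Option.toList_some]
  rw [follow_append]
  rfl

end RepAux
namespace RepAux

open Filter DPTA

variable {Alpha Q : Type}

lemma forward_dir [Fintype Alpha] [Fintype Q] (M : DPTA Alpha Q) (q : Q)
    (hL : ∃ t ∈ M.Lang, ∃ S : Set (List Bool), S.Infinite ∧
        (∀ v ∈ S, M.run t v = q) ∧
        (∀ v ∈ S, ∀ w ∈ S, v ≠ w → ¬ v <+: w ∧ ¬ w <+: v)) :
    M.Productive q ∧ ReplicatedByAccLoop M q := by
  classical
  obtain ⟨t, htL, S, hSinf, hSq, hSinc⟩ := hL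
  obtain ⟨v0, hv0⟩ := hSinf.nonempty
  refine ⟨⟨t, htL, v0, hSq v0 hv0⟩, ?_⟩
  -- König-style construction of an infinite path with infinitely many branch points
  set Sinf : List Bool → Set (List Bool) := fun u => {v ∈ S | u <+: v} with hSinfdef
  have hSv : ∀ v ∈ S, ¬ (Sinf v).Infinite := by
    intro v hv hinf
    refine hinf (Set.Finite.subset (Set.finite_singleton v) ?_)
    rintro w ⟨hwS, hpre⟩
    by_contra hne
    exact (hSinc v hv w hwS (fun he => hne (he ▸ rfl))).1 hpre
  have key : ∀ u, (Sinf u).Infinite → ∃ e, (Sinf (u ++ [e])).Infinite := by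
    intro u hu
    by_contra h
    push_neg at h
    try simp only [Set.not_infinite] at h
    refine hu (Set.Finite.subset (((Set.finite_singleton u).union (h false)).union (h true)) ?_)
    rintro v ⟨hvS, w, rfl⟩
    cases w with
    | nil => left; left; simp
    | cons e w' =>
      cases e
      · left; right; exact ⟨hvS, w', by simp⟩
      · right; exact ⟨hvS, w', by simp⟩
  set ch : List Bool → Bool := fun u => if (Sinf (u ++ [true])).Infinite then true else false
    with hchdef
  have hch : ∀ u, (Sinf u).Infinite → (Sinf (u ++ [ch u])).Infinite := by
    intro u hu
    by_cases ht : (Sinf (u ++ [true])).Infinite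
    · have hct : ch u = true := by simp only [hchdef]; rw [if_pos ht]
      rw [hct]; exact ht
    · have hcf : ch u = false := by simp only [hchdef]; rw [if_neg ht]
      rw [hcf]
      obtain ⟨e, he⟩ := key u hu
      cases e
      · exact he
      · exact absurd he ht
  set g : ℕ → List Bool := fun n => Nat.rec [] (fun _ u => u ++ [ch u]) n with hgdef
  have hgsucc : ∀ n, g (n + 1) = g n ++ [ch (g n)] := fun n => rfl
  set π : ℕ → Bool := fun n => ch (g n) with hπdef
  have hpg : ∀ n, pref π n = g n := by
    intro n
    induction n with
    | zero => rfl
    | succ n ih => rw [pref_snoc, ih, hgsucc]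
  have hglen : ∀ n, (g n).length = n := by
    intro n
    induction n with
    | zero => rfl
    | succ n ih => rw [hgsucc]; simp [ih]
  have hginf : ∀ n, (Sinf (g n)).Infinite := by
    intro n
    induction n with
    | zero =>
      have : Sinf (g 0) = S := by
        ext v
        exact ⟨fun h => h.1, fun h => ⟨h, List.nil_prefix⟩⟩
      rw [this]; exact hSinf
    | succ n ih => rw [hgsucc]; exact hch _ ih
  have hgS : ∀ n, g n ∉ S := fun n hn => hSv _ hn (hginf n)
  set BRset : Set ℕ := {m | ∃ v ∈ S, ∃ _ : m < v.length, g m <+: v ∧ v[m] = !(π m)}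
    with hBRdef
  have hbr : ∀ N, ∃ m, N ≤ m ∧ m ∈ BRset := by
    intro N
    obtain ⟨v, hvS, hvpre⟩ := (hginf N).nonempty
    have hPex : ∃ k, ¬ g (N + k + 1) <+: v := by
      refine ⟨v.length, fun hc => ?_⟩
      have h3 := hglen (N + v.length + 1)
      have h4 := hc.length_le
      omega
    set k := Nat.find hPex with hkdef
    set m := N + k with hmdef
    have hknot : ¬ g (m + 1) <+: v := Nat.find_spec hPex
    have hmin : ∀ j < k, g (N + j + 1) <+: v := fun j hj => not_not.mp (Nat.find_min hPex hj)
    have hgmv : g m <+: v := by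
      rcases Nat.eq_zero_or_pos k with hk0 | hkpos
      · rw [hmdef, hk0]; simpa using hvpre
      · have := hmin (k - 1) (by omega)
        rwa [show N + (k - 1) + 1 = m by omega] at this
    have hmle : m ≤ v.length := by
      have := hgmv.length_le; rwa [hglen] at this
    have hmlt : m < v.length := by
      rcases lt_or_eq_of_le hmle with h | h
      · exact h
      · exfalso
        have : g m = v := hgmv.eq_of_length (by rw [hglen, h])
        exact hgS m (this ▸ hvS)
    refine ⟨m, by omega, v, hvS, hmlt, hgmv, ?_⟩
    by_contra hc
    have hvm : v[m] = π m := by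
      cases h1 : v[m] <;> cases h2 : π m <;> simp_all
    apply hknot
    have htk : v.take m = g m := by
      have := List.prefix_iff_eq_take.mp hgmv
      rw [hglen] at this
      exact this.symm
    have hvsplit : v = g m ++ π m :: v.drop (m + 1) := by
      have h2 := (List.take_append_drop m v).symm
      rw [List.drop_eq_getElem_cons hmlt, htk, hvm] at h2
      exact h2
    refine ⟨v.drop (m + 1), ?_⟩
    rw [hgsucc]
    conv_rhs => rw [hvsplit]
    simp [hπdef]
  have hBRinf : BRset.Infinite := by
    rw [← Nat.frequently_atTop_iff_infinite, frequently_atTop]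
    intro a
    obtain ⟨m, hm1, hm2⟩ := hbr a
    exact ⟨m, hm1, hm2⟩
  set F : ℕ → Q × Alpha × Bool := fun m => (M.run t (g m), t (g m), π m) with hFdef
  obtain ⟨⟨q1, s, d⟩, hfib⟩ := exists_frequent F BRset hBRinf
  -- rank analysis along the path
  set f : ℕ → ℕ := fun n => M.rank (M.run t (g n)) with hfdef
  have hAccπ : DPTA.ParityAccept f := by
    have h1 : M.AcceptsFrom M.init t := htL
    have h2 := h1 π
    have heq : (fun n => M.rank (M.runFrom M.init t (pref π n))) = f := by
      funext n; rw [hpg n]; rfl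
    rwa [heq] at h2
  set B := Finset.univ.sup M.rank with hBdef
  obtain ⟨r, hrsup, hrfreq, hrev⟩ := top_rank f B
    (fun n => Finset.le_sup (f := M.rank) (Finset.mem_univ (M.run t (g n))))
  have hEvenr : Even r := by
    rw [hrsup]
    exact hAccπ
  obtain ⟨N, hN⟩ := eventually_atTop.mp hrev
  obtain ⟨m1, hm1mem, hm1N⟩ := (hfib.exists_gt N)
  obtain ⟨n0, hn0ge, hn0⟩ := frequently_atTop.mp hrfreq (m1 + 1)
  obtain ⟨m2, hm2mem, hm2gt⟩ := (hfib.exists_gt n0)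
  obtain ⟨hm1br, hm1F⟩ := hm1mem
  obtain ⟨hm2br, hm2F⟩ := hm2mem
  rw [hFdef, Prod.mk.injEq, Prod.mk.injEq] at hm1F hm2F
  obtain ⟨hm1q1, hm1s, hm1d⟩ := hm1F
  obtain ⟨hm2q1, _, _⟩ := hm2F
  obtain ⟨v1, hv1S, hv1len, hv1pre, hv1m⟩ := hm1br
  -- the loop
  obtain ⟨c, hc⟩ : ∃ c, m2 - m1 = c + 1 := ⟨m2 - m1 - 1, by omega⟩
  set t' := subt t (g m1) with ht'def
  set seg : List Bool := List.ofFn fun j : Fin (c + 1) => π (m1 + j) with hsegdef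
  have hsegtake : ∀ kk ≤ c + 1, seg.take kk = List.ofFn fun j : Fin kk => π (m1 + j) := by
    intro kk hkk
    apply List.ext_getElem
    · simp [hsegdef]; omega
    · intro i h1 h2
      simp only [hsegdef, List.getElem_take, List.getElem_ofFn]
  have hgm : ∀ kk ≤ c + 1, g (m1 + kk) = g m1 ++ seg.take kk := by
    intro kk hkk
    rw [← hpg, ← hpg, pref_add π m1 kk, hsegtake kk hkk]
  have hrun_seg : ∀ kk ≤ c + 1, M.runFrom q1 t' (seg.take kk) = M.run t (g (m1 + kk)) := by
    intro kk hkk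
    rw [DPTA.run, hgm kk hkk, runFrom_append, ← ht'def, ← DPTA.run, hm1q1]
  set LS := stepsOf t' seg with hLSdef
  have hLSlen : LS.length = c + 1 := by rw [hLSdef, stepsOf_length]; simp [hsegdef]
  have hseglen : seg.length = c + 1 := by simp [hsegdef]
  have hfollowLS : M.follow q1 LS = q1 := by
    rw [hLSdef, ← runFrom_eq_follow]
    have := hrun_seg (c + 1) le_rfl
    rw [List.take_of_length_le (le_of_eq hseglen)] at this
    rw [this, show m1 + (c + 1) = m2 by omega, hm2q1]
  -- decompose the loop
  have hsegcons : seg = d :: List.ofFn fun j : Fin c => π (m1 + 1 + j) := by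
    rw [hsegdef, List.ofFn_succ]
    simp only [Fin.val_zero, Nat.add_zero, Fin.val_succ]
    rw [hm1d]
    congr 1
    apply List.ext_getElem (by simp)
    intro i h1 h2
    simp only [List.getElem_ofFn]
    have h5 : m1 + (i + 1) = m1 + 1 + i := by omega
    rw [h5]
  have ht'nil : t' [] = s := by rw [ht'def]; simp [subt, hm1s]
  have hLScons : LS = (s, d) :: stepsOf (fun u => t' (d :: u))
      (List.ofFn fun j : Fin c => π (m1 + 1 + j)) := by
    rw [hLSdef, hsegcons]
    simp [stepsOf, ht'nil]
  -- max rank on the loop is r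
  have hstates_le : ∀ x ∈ (M.statesOn q1 LS).map M.rank, x ≤ r := by
    intro x hx
    obtain ⟨p, hp, rfl⟩ := List.mem_map.mp hx
    obtain ⟨kk, hkk, hfoll⟩ := mem_statesOn.mp hp
    rw [hLSlen] at hkk
    rw [hLSdef, stepsOf_take, ← runFrom_eq_follow, hrun_seg kk hkk] at hfoll
    rw [← hfoll]
    exact hN (m1 + kk) (by omega)
  have hr_mem : r ∈ (M.statesOn q1 LS).map M.rank := by
    have hkk : n0 - m1 ≤ c + 1 := by omega
    refine List.mem_map.mpr ⟨M.follow q1 (LS.take (n0 - m1)), mem_statesOn.mpr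
      ⟨n0 - m1, by rw [hLSlen]; exact hkk, rfl⟩, ?_⟩
    rw [hLSdef, stepsOf_take, ← runFrom_eq_follow, hrun_seg _ hkk,
      show m1 + (n0 - m1) = n0 by omega]
    exact hn0
  have hmax : M.maxRankOn q1 LS = r := by
    rw [DPTA.maxRankOn]
    exact le_antisymm (foldr_max_le hstates_le) (le_foldr_max hr_mem)
  -- the path to q
  have hv1m' : v1[m1] = !d := by rw [hv1m, hm1d]
  have htk1 : v1.take m1 = g m1 := by
    have := List.prefix_iff_eq_take.mp hv1pre
    rw [hglen] at this
    exact this.symm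
  have hv1split : v1 = g m1 ++ (!d) :: v1.drop (m1 + 1) := by
    have h2 := (List.take_append_drop m1 v1).symm
    rw [List.drop_eq_getElem_cons hv1len, htk1, hv1m'] at h2
    exact h2
  set rest := stepsOf (subt t (g m1 ++ [!d])) (v1.drop (m1 + 1)) with hrestdef
  have hrest : M.follow q1 ((s, !d) :: rest) = q := by
    have htree : (fun u => t' ((!d) :: u)) = subt t (g m1 ++ [!d]) := by
      funext u
      show t ((g m1) ++ ((!d) :: u)) = t ((g m1 ++ [!d]) ++ u)
      congr 1
      simp
    have hsteps : (s, !d) :: rest = stepsOf t' ((!d) :: v1.drop (m1 + 1)) := by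
      rw [show stepsOf t' ((!d) :: v1.drop (m1 + 1)) = (t' [], !d) ::
        stepsOf (fun u => t' ((!d) :: u)) (v1.drop (m1 + 1)) from rfl, ht'nil, htree]
    have h5 : M.runFrom M.init t (g m1 ++ (!d) :: v1.drop (m1 + 1)) =
        M.runFrom q1 t' ((!d) :: v1.drop (m1 + 1)) := by
      rw [runFrom_append, ← ht'def]
      congr 1
    rw [hsteps, ← runFrom_eq_follow, ← h5, ← hv1split]
    exact hSq v1 hv1S
  refine ⟨q1, s, d, stepsOf (fun u => t' (d :: u)) (List.ofFn fun j : Fin c => π (m1 + 1 + j)),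
    ⟨by simp, ?_⟩, ?_, rest, hrest⟩
  · rw [← hLScons]
    exact hfollowLS
  · rw [← hLScons, hmax]
    exact hEvenr

end RepAux
namespace RepAux

open Filter DPTA

variable {Alpha Q : Type}

lemma backward_dir (M : DPTA Alpha Q) (hM : M.Normalized) (q : Q)
    (hq : M.Productive q) (hrep : ReplicatedByAccLoop M q) :
    ∃ t ∈ M.Lang, ∃ S : Set (List Bool), S.Infinite ∧
        (∀ v ∈ S, M.run t v = q) ∧
        (∀ v ∈ S, ∀ w ∈ S, v ≠ w → ¬ v <+: w ∧ ¬ w <+: v) := by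
  classical
  obtain ⟨hreach, bot, hprodQ, hbotP, htrans⟩ := hM
  obtain ⟨t0, ht0, v0, hv0⟩ := hq
  have htq : M.AcceptsFrom q (subt t0 v0) := by
    rw [← hv0]
    exact acceptsFrom_subtree ht0 v0
  set Good : Q → Prop := fun p => ∃ tt, M.AcceptsFrom p tt with hGooddef
  have hgood_run : ∀ (t : List Bool → Alpha), t ∈ M.Lang → ∀ v, Good (M.run t v) :=
    fun t ht v => ⟨subt t v, acceptsFrom_subtree ht v⟩
  have hgood_iff : ∀ p, Good p ↔ some p ≠ bot := by
    intro p
    constructor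
    · rintro ⟨tt, htt⟩ hbe
      exact (hbotP p hbe).1 tt htt
    · intro hne
      obtain ⟨t1, ht1, w1, hw1⟩ := hprodQ p hne
      exact hw1 ▸ hgood_run t1 ht1 w1
  have hnext_bot : ∀ p, some p = bot → ∀ a e, M.next p a e = p := by
    intro p hp a e
    have := (hbotP p hp).2 a
    cases e <;> simp [DPTA.next, this]
  have hfollow_bot : ∀ p, some p = bot → ∀ st, M.follow p st = p := by
    intro p hp st
    induction st with
    | nil => rfl
    | cons x st ih =>
      rw [follow_cons', hnext_bot p hp]
      exact ih
  have hgood_follow : ∀ p st, Good (M.follow p st) → Good p := by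
    intro p st hgf
    by_contra hng
    have hpb : some p = bot := by
      by_contra h2
      exact hng ((hgood_iff p).mpr h2)
    rw [hfollow_bot p hpb st] at hgf
    exact hng hgf
  have hsib : ∀ p a e, Good (M.next p a e) → Good (M.next p a (!e)) := by
    intro p a e hg
    rcases htrans p a with hpt | ⟨hb1, hb2⟩
    · obtain ⟨t1, ht1, w1, hw1, hletter⟩ := hpt
      have h1 : (subt t1 w1) [] = a := by simp [subt, hletter]
      have h2 : M.runFrom M.init t1 w1 = p := hw1
      have heq : M.next p a (!e) = M.run t1 (w1 ++ [!e]) := by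
        rw [DPTA.run, runFrom_append, runFrom_cons, runFrom_nil, h1, h2]
      rw [heq]
      exact hgood_run t1 ht1 _
    · exfalso
      have hb : some (M.next p a e) = bot := by
        cases e
        · simpa [DPTA.next] using hb1
        · simpa [DPTA.next] using hb2
      exact ((hgood_iff _).mp hg) hb
  obtain ⟨q1, s, d, l, hLoop, hEven, rest, hRest⟩ := hrep
  set L : List (Alpha × Bool) := (s, d) :: l with hLdef
  set nL := l.length + 1 with hnLdef
  have hnLpos : 0 < nL := Nat.succ_pos _
  have hLlen : L.length = nL := by simp [hLdef, hnLdef]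
  set step : ℕ → Alpha × Bool :=
    fun i => L[i % nL]'(by rw [hLlen]; exact Nat.mod_lt _ hnLpos) with hstepdef
  set gs : ℕ → Q := fun n => Nat.rec q1 (fun k p => M.next p (step k).1 (step k).2) n with hgsdef
  have hgs : ∀ k, gs (k + 1) = M.next (gs k) (step k).1 (step k).2 := fun k => rfl
  have hgs0 : gs 0 = q1 := rfl
  have hstep_per : ∀ i, step (i + nL) = step i := by
    intro i
    simp only [hstepdef, Nat.add_mod_right]
  have hstep_mul : ∀ k, step (k * nL) = (s, d) := by
    intro k
    simp only [hstepdef, Nat.mul_mod_left]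
    rfl
  have hofFnL : (List.ofFn fun j : Fin nL => step (j : ℕ)) = L := by
    apply List.ext_getElem (by simp [hLlen, hnLdef])
    intro i h1 h2
    simp only [List.getElem_ofFn, hstepdef]
    congr 1
    exact Nat.mod_eq_of_lt (by rwa [hLlen] at h2)
  have hfoldgs := follow_ofFn M gs step hgs
  have hgsnL : gs nL = q1 := by
    have h1 := hfoldgs 0 nL
    simp only [Nat.zero_add] at h1
    rw [hofFnL] at h1
    rw [← h1, hgs0]
    exact hLoop.2
  have hgs_per : ∀ i, gs (i + nL) = gs i := by
    intro i
    induction i with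
    | zero => simpa [hgs0] using hgsnL
    | succ i ih =>
      have h1 : i + 1 + nL = (i + nL) + 1 := by omega
      rw [h1, hgs (i + nL), ih, hstep_per, ← hgs i]
  have hgs_addmul : ∀ a k, gs (a + k * nL) = gs a := by
    intro a k
    induction k with
    | zero => simp
    | succ k ih =>
      rw [show a + (k + 1) * nL = (a + k * nL) + nL by ring, hgs_per, ih]
  have hgs_mul : ∀ k, gs (k * nL) = q1 := by
    intro k
    have := hgs_addmul 0 k
    simpa [hgs0] using this
  have hgs_mod : ∀ n, gs n = gs (n % nL) := by
    intro n
    conv_lhs => rw [show n = n % nL + n / nL * nL from (Nat.mod_add_div' n nL).symm]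
    exact hgs_addmul _ _
  have hgs_take : ∀ m, m ≤ nL → gs m = M.follow q1 (L.take m) := by
    intro m hm
    have h1 := hfoldgs 0 m
    simp only [Nat.zero_add] at h1
    rw [← h1, hgs0]
    congr 1
    apply List.ext_getElem (by simp [hLlen]; omega)
    intro i hi1 hi2
    simp only [List.getElem_ofFn, List.getElem_take, hstepdef]
    congr 1
    exact Nat.mod_eq_of_lt (by simp at hi1; omega)
  have hGoodq : Good q := ⟨subt t0 v0, htq⟩
  have hGoodq1 : Good q1 := hgood_follow q1 ((s, !d) :: rest) (by rw [hRest]; exact hGoodq)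
  have hGoodgs : ∀ i, Good (gs i) := by
    intro i
    apply hgood_follow (gs i) (List.ofFn fun j : Fin (nL - i % nL) => step (i + j))
    rw [hfoldgs i (nL - i % nL)]
    have hx : i + (nL - i % nL) = (i / nL + 1) * nL := by
      have h1 := Nat.mod_add_div' i nL
      have h2 : i % nL < nL := Nat.mod_lt _ hnLpos
      have h3 : (i / nL + 1) * nL = i / nL * nL + nL := by ring
      omega
    rw [hx, hgs_mul]
    exact hGoodq1
  have hGoodSib : ∀ i, Good (M.next (gs i) (step i).1 (!(step i).2)) := by
    intro i
    apply hsib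
    rw [← hgs i]
    exact hGoodgs (i + 1)
  set qB := M.next q1 s (!d) with hqBdef
  have hqB_rest : M.follow qB rest = q := by
    rw [← hRest]
    exact (follow_cons M q1 s (!d) rest).symm
  have hGood_restStates : ∀ j, Good (M.follow qB (rest.take j)) := by
    intro j
    apply hgood_follow _ (rest.drop j)
    rw [← follow_append, List.take_append_drop, hqB_rest]
    exact hGoodq
  have hsibr : ∀ j, ∃ tt, ∀ h : j < rest.length,
      M.AcceptsFrom (M.next (M.follow qB (rest.take j)) (rest[j]'h).1 (!(rest[j]'h).2)) tt := by
    intro j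
    by_cases hj : j < rest.length
    · have hgood : Good (M.next (M.follow qB (rest.take j)) (rest[j]'hj).1 (!(rest[j]'hj).2)) := by
        apply hsib
        rw [← follow_take_succ M rest j hj qB]
        exact hGood_restStates (j + 1)
      obtain ⟨tt, htt⟩ := hgood
      exact ⟨tt, fun h => htt⟩
    · exact ⟨subt t0 v0, fun h => absurd h hj⟩
  set sibr : ℕ → List Bool → Alpha := fun j => (hsibr j).choose with hsibrdef
  set B := graft rest sibr (subt t0 v0) with hBdef
  have hB : M.AcceptsFrom qB B :=
    graft_accept M rest sibr _ qB (fun i h => (hsibr i).choose_spec h)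
      (by rw [hqB_rest]; exact htq)
  have hsibex : ∀ i, ∃ tt, M.AcceptsFrom (M.next (gs i) (step i).1 (!(step i).2)) tt ∧
      (i % nL = 0 → tt = B) := by
    intro i
    by_cases hi : i % nL = 0
    · refine ⟨B, ?_, fun _ => rfl⟩
      have hgsi : gs i = q1 := by rw [hgs_mod i, hi]; exact hgs0
      have hstepi : step i = (s, d) := by
        have h1 : i = (i / nL) * nL := by
          have := Nat.mod_add_div' i nL
          omega
        rw [h1]
        exact hstep_mul _
      rw [hgsi, hstepi]
      exact hB
    · obtain ⟨tt, htt⟩ := hGoodSib i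
      exact ⟨tt, htt, fun h => absurd h hi⟩
  set sib : ℕ → List Bool → Alpha := fun i => (hsibex i).choose with hsibdef
  have hparity : DPTA.ParityAccept fun n => M.rank (gs n) := by
    set A := {r : ℕ | ∃ᶠ n in atTop, M.rank (gs n) = r} with hAdef
    have hAchar : ∀ r, r ∈ A ↔ ∃ n, M.rank (gs n) = r := by
      intro r
      constructor
      · exact fun h => h.exists
      · rintro ⟨n, rfl⟩
        show ∃ᶠ m in atTop, M.rank (gs m) = M.rank (gs n)
        rw [frequently_atTop]
        intro a
        refine ⟨n + a * nL, ?_, by rw [hgs_addmul n a]⟩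
        have : a ≤ a * nL := Nat.le_mul_of_pos_right a hnLpos
        omega
    set R := M.maxRankOn q1 L with hRdef
    have hub : ∀ r ∈ A, r ≤ R := by
      intro r hr
      obtain ⟨n, rfl⟩ := (hAchar r).mp hr
      rw [hgs_mod n]
      have h2 : n % nL < nL := Nat.mod_lt _ hnLpos
      rw [hgs_take _ (le_of_lt h2), hRdef, DPTA.maxRankOn]
      apply le_foldr_max
      exact List.mem_map_of_mem (mem_statesOn.mpr ⟨n % nL, by rw [hLlen]; omega, rfl⟩)
    have hne : A.Nonempty := ⟨M.rank (gs 0), (hAchar _).mpr ⟨0, rfl⟩⟩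
    have hsup : sSup A = R := by
      apply le_antisymm (csSup_le hne hub)
      rcases foldr_max_mem ((M.statesOn q1 L).map M.rank) with h0 | hmem
      · have hR0 : R = 0 := by rw [hRdef, DPTA.maxRankOn]; exact h0
        rw [hR0]
        exact Nat.zero_le _
      · obtain ⟨p, hp, hpr⟩ := List.mem_map.mp hmem
        obtain ⟨kk, hkk, hfp⟩ := mem_statesOn.mp hp
        have hkk' : kk ≤ nL := by rwa [hLlen] at hkk
        have hpgs : p = gs kk := by rw [hgs_take kk hkk', hfp]
        have hR : R = M.rank (gs kk) := by
          rw [hRdef, DPTA.maxRankOn, ← hpr, hpgs]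
        apply le_csSup ⟨R, hub⟩
        exact (hAchar R).mpr ⟨kk, hR.symm⟩
    show Even (sSup A)
    rw [hsup]
    exact hEven
  have hspine : M.AcceptsFrom q1 (og step sib 0) := by
    have h := og_accept hgs (fun i => ((hsibex i).choose_spec).1) hparity
    exact h
  obtain ⟨steps0, hsteps0⟩ := hreach q1
  have hGood_init : ∀ j, Good (M.follow M.init (steps0.take j)) := by
    intro j
    apply hgood_follow _ (steps0.drop j)
    rw [← follow_append, List.take_append_drop, hsteps0]
    exact hGoodq1
  have hsib0ex : ∀ j, ∃ tt, ∀ h : j < steps0.length,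
      M.AcceptsFrom (M.next (M.follow M.init (steps0.take j))
        (steps0[j]'h).1 (!(steps0[j]'h).2)) tt := by
    intro j
    by_cases hj : j < steps0.length
    · have hgood : Good (M.next (M.follow M.init (steps0.take j))
          (steps0[j]'hj).1 (!(steps0[j]'hj).2)) := by
        apply hsib
        rw [← follow_take_succ M steps0 j hj M.init]
        exact hGood_init (j + 1)
      obtain ⟨tt, htt⟩ := hgood
      exact ⟨tt, fun h => htt⟩
    · exact ⟨subt t0 v0, fun h => absurd h hj⟩
  set sib0 : ℕ → List Bool → Alpha := fun j => (hsib0ex j).choose with hsib0def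
  set t : List Bool → Alpha := graft steps0 sib0 (og step sib 0) with htdef
  have htLang : t ∈ M.Lang := by
    show M.AcceptsFrom M.init t
    rw [htdef]
    exact graft_accept M steps0 sib0 _ M.init (fun i h => (hsib0ex i).choose_spec h)
      (by rw [hsteps0]; exact hspine)
  set dirs0 := steps0.map Prod.snd with hdirs0def
  set restd := rest.map Prod.snd with hrestddef
  set u : ℕ → List Bool :=
    fun k => dirs0 ++ (List.ofFn fun j : Fin (k * nL) => (step (j : ℕ)).2) ++ (!d) :: restd
    with hudef
  have hrun_u : ∀ k, M.run t (u k) = q := by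
    intro k
    show M.runFrom M.init t (u k) = q
    have hu : u k = dirs0 ++ ((List.ofFn fun j : Fin (k * nL) => (step (j : ℕ)).2) ++
        (!d) :: restd) := by
      rw [hudef]
      simp [List.append_assoc]
    rw [hu, htdef, hdirs0def, graft_run, hsteps0]
    have hdev := og_run_dev (sib := sib) hgs 0 (k * nL) restd
    simp only [Nat.zero_add] at hdev
    rw [hstep_mul k, hgs_mul k] at hdev
    simp only [hgs0] at hdev
    rw [hdev]
    have hsibB : sib (k * nL) = B := (hsibex (k * nL)).choose_spec.2 (Nat.mul_mod_left k nL)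
    rw [hsibB, hBdef]
    have h2 := graft_run M rest sibr (subt t0 v0) qB []
    rw [List.append_nil] at h2
    show M.runFrom qB (graft rest sibr (subt t0 v0)) restd = q
    rw [hrestddef, h2, runFrom_nil, hqB_rest]
  have huinj : Function.Injective u := by
    intro a b hab
    have hlen := congrArg List.length hab
    simp only [hudef, List.length_append, List.length_ofFn, List.length_cons] at hlen
    have hmul : a * nL = b * nL := by omega
    exact Nat.eq_of_mul_eq_mul_right hnLpos hmul
  have hofFn_split : ∀ a b : ℕ, a ≤ b →
      (List.ofFn fun j : Fin (b * nL) => (step (j : ℕ)).2) =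
        (List.ofFn fun j : Fin (a * nL) => (step (j : ℕ)).2) ++
          (List.ofFn fun j : Fin (b * nL - a * nL) => (step (a * nL + j)).2) := by
    intro a b hab
    have hle : a * nL ≤ b * nL := Nat.mul_le_mul_right _ hab
    apply List.ext_getElem (by simp; omega)
    intro i h1 h2
    simp only [List.getElem_ofFn, List.getElem_append, List.length_ofFn]
    split_ifs with hi
    · rfl
    · congr 2
      show i = a * nL + (i - a * nL)
      omega
  have hincomp : ∀ a b, a < b → ¬ u a <+: u b ∧ ¬ u b <+: u a := by
    intro a b hab
    have hsplit := hofFn_split a b (le_of_lt hab)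
    set Z := List.ofFn fun j : Fin (b * nL - a * nL) => (step (a * nL + j)).2 with hZdef
    have hZlen : 0 < Z.length := by
      have h4 : a * nL < b * nL := mul_lt_mul_of_pos_right hab hnLpos
      simp only [hZdef, List.length_ofFn]
      omega
    have hZne : Z ≠ [] := List.ne_nil_of_length_pos hZlen
    have hZhead : Z = d :: Z.tail := by
      have h0 : Z.head hZne = d := by
        rw [← List.getElem_zero hZlen]
        simp only [hZdef, List.getElem_ofFn]
        rw [show a * nL + (0 : ℕ) = a * nL by omega]
        rw [hstep_mul a]
      rw [← h0]
      exact (List.cons_head_tail hZne).symm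
    set X := dirs0 ++ (List.ofFn fun j : Fin (a * nL) => (step (j : ℕ)).2) with hXdef
    have hua : u a = X ++ (!d) :: restd := rfl
    have hub' : u b = X ++ d :: (Z.tail ++ (!d) :: restd) := by
      show dirs0 ++ (List.ofFn fun j : Fin (b * nL) => (step (j : ℕ)).2) ++ (!d) :: restd = _
      rw [hsplit, hZhead]
      simp [hXdef, List.append_assoc]
    constructor
    · intro hpre
      rw [hua, hub'] at hpre
      have h5 := (List.prefix_append_right_inj X).mp hpre
      have h6 := (List.cons_prefix_cons.mp h5).1
      simp at h6
    · intro hpre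
      rw [hua, hub'] at hpre
      have h5 := (List.prefix_append_right_inj X).mp hpre
      have h6 := (List.cons_prefix_cons.mp h5).1
      simp at h6
  refine ⟨t, htLang, Set.range u, Set.infinite_range_of_injective huinj, ?_, ?_⟩
  · rintro v ⟨k, rfl⟩
    exact hrun_u k
  · rintro v ⟨a, rfl⟩ w ⟨b, rfl⟩ hne
    rcases lt_trichotomy a b with h | h | h
    · exact hincomp a b h
    · exact absurd (h ▸ rfl) hne
    · exact ⟨(hincomp b a h).2, (hincomp b a h).1⟩

end RepAux
/-- Replication Lemma: a state occurs in infinitely many pairwise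
incomparable nodes of some accepting run iff it is productive and replicated by an
accepting loop. -/
theorem replication_lemma {Alpha Q : Type} [Fintype Alpha] [Nonempty Alpha] [Fintype Q]
    (M : DPTA Alpha Q) (hM : M.Normalized) (q : Q) :
    (∃ t ∈ M.Lang, ∃ S : Set (List Bool), S.Infinite ∧
        (∀ v ∈ S, M.run t v = q) ∧
        (∀ v ∈ S, ∀ w ∈ S, v ≠ w → ¬ v <+: w ∧ ¬ w <+: v)) ↔
      (M.Productive q ∧ ReplicatedByAccLoop M q) := by
  constructor
  · exact RepAux.forward_dir M q
  · rintro ⟨hprod, hrep⟩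
    exact RepAux.backward_dir M hM q hprod hrep
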